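/- Let 0 < a < b, 1 < σ ≤ 2, K > 0, and let E = C([a,b], ℝ) with the sup norm. Let G be the Green's function G(x,τ) = (1/Γ(σ))·[((ln(x/a)/ln(b/a))^{σ−1}·(ln(b/τ))^{σ−1} − (ln(x/τ))^{σ−1})/τ] for a ≤ τ ≤ x ≤ b, and G(x,τ) = (1/Γ(σ))·(ln(x/a)/ln(b/a))^{σ−1}·(ln(b/τ))^{σ−1}/τ for a ≤ x ≤ τ ≤ b. Let F : [a,b] × ℝ → ℝ be continuous and K-Lipschitz in its second argument, let B ∈ ℝ, and define R : E → E by (R u)(x) = ∫_a^b G(x,τ)·F(τ, u(τ)) dτ + B·(ln(x/a)/ln(b/a))^{σ−1}. If K·(σ−1)^{σ−1}·(ln(b/a))^{σ}/(σ^{σ+1}·Γ(σ)) < 1, then R has a unique fixed point in E. -/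

import Mathlib

open Real Set


lemma aux_maxineq {p s : ℝ} (hp : 0 < p) (hs0 : 0 ≤ s) (hs1 : s ≤ 1) :
    s ^ p - s ^ (p + 1) ≤ p ^ p / (p + 1) ^ (p + 1) := by
  have hp1 : (0:ℝ) < p + 1 := by linarith
  have hRpos : 0 < p ^ p / (p + 1) ^ (p + 1) := by positivity
  rcases eq_or_lt_of_le hs0 with h0 | h0
  · simp [← h0, Real.zero_rpow hp.ne', Real.zero_rpow hp1.ne']
    positivity
  · -- s > 0
    have key := Real.geom_mean_le_arith_mean2_weighted
      (w₁ := p / (p + 1)) (w₂ := 1 / (p + 1))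
      (p₁ := s * (p + 1) / p) (p₂ := (1 - s) * (p + 1))
      (by positivity) (by positivity) (by positivity)
      (by nlinarith) (by field_simp)
    have hrhs : p / (p + 1) * (s * (p + 1) / p) + 1 / (p + 1) * ((1 - s) * (p + 1)) = 1 := by
      field_simp; ring
    rw [hrhs] at key
    set A := (s * (p + 1) / p) ^ (p / (p + 1)) * ((1 - s) * (p + 1)) ^ (1 / (p + 1)) with hA
    have hA0 : 0 ≤ A := mul_nonneg (Real.rpow_nonneg (by positivity) _) (Real.rpow_nonneg (by nlinarith) _)
    have key2 : A ^ (p + 1) ≤ 1 := Real.rpow_le_one hA0 key hp1.le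
    have hexp : A ^ (p + 1) = (s * (p + 1) / p) ^ p * ((1 - s) * (p + 1)) := by
      rw [hA, Real.mul_rpow (Real.rpow_nonneg (by positivity) _) (Real.rpow_nonneg (by nlinarith) _),
        ← Real.rpow_mul (by positivity), ← Real.rpow_mul (by nlinarith)]
      rw [div_mul_cancel₀ _ hp1.ne', one_div, inv_mul_cancel₀ hp1.ne', Real.rpow_one]
    rw [hexp] at key2
    have hsplit : (s * (p + 1) / p) ^ p = s ^ p * (p + 1) ^ p / p ^ p := by
      rw [Real.div_rpow (by positivity) hp.le, Real.mul_rpow hs0 hp1.le]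
    rw [hsplit] at key2
    have hQ : (p + 1) ^ (p + 1) = (p + 1) ^ p * (p + 1) := by
      rw [Real.rpow_add hp1, Real.rpow_one]
    have hsp1 : s ^ (p + 1) = s ^ p * s := by
      rw [Real.rpow_add h0, Real.rpow_one]
    have hPpos : (0:ℝ) < p ^ p := Real.rpow_pos_of_pos hp _
    have hQpos : (0:ℝ) < (p+1) ^ (p+1) := Real.rpow_pos_of_pos hp1 _
    have hQp : (0:ℝ) < (p+1) ^ p := Real.rpow_pos_of_pos hp1 _
    have k3 : s^p*(p+1)^p*((1-s)*(p+1)) ≤ p^p := by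
      rw [div_mul_eq_mul_div, div_le_one hPpos] at key2
      linarith [key2]
    rw [hsp1, le_div_iff₀ hQpos]
    nlinarith [k3, hQ]


noncomputable def Gn (a b σ x τ : ℝ) : ℝ :=
  (1 / Real.Gamma σ) *
    (((Real.log (x / a) / Real.log (b / a)) ^ (σ - 1) * (Real.log (b / τ)) ^ (σ - 1)
      - (max 0 (Real.log (x / τ))) ^ (σ - 1)) / τ)

lemma cont_rpow_const (p : ℝ) (hp : 0 ≤ p) : Continuous fun t : ℝ => t ^ p :=
  continuous_iff_continuousAt.2 fun x => by
    rcases eq_or_ne x 0 with h | h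
    · exact Real.continuousAt_rpow_const _ _ (Or.inr hp)
    · exact Real.continuousAt_rpow_const _ _ (Or.inl h)

lemma integral_aux {σ : ℝ} (hσ1 : 1 < σ) {a x : ℝ} (ha : 0 < a) (hax : a ≤ x) (c : ℝ) :
    ∫ τ in a..x, (c - Real.log τ) ^ (σ - 1) / τ
      = ((c - Real.log a) ^ σ - (c - Real.log x) ^ σ) / σ := by
  have hσ0 : 0 < σ := by linarith
  have hsub : Set.uIcc a x ⊆ {(0:ℝ)}ᶜ := by
    rw [Set.uIcc_of_le hax]
    intro τ hτ
    exact (lt_of_lt_of_le ha hτ.1).ne'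
  have hderiv : ∀ τ ∈ Set.uIcc a x,
      HasDerivAt (fun t => -(1/σ) * (c - Real.log t) ^ σ)
        ((c - Real.log τ) ^ (σ - 1) / τ) τ := by
    intro τ hτ
    have hτ0 : 0 < τ := by
      rw [Set.uIcc_of_le hax] at hτ
      exact lt_of_lt_of_le ha hτ.1
    have h1 : HasDerivAt (fun t => c - Real.log t) (-τ⁻¹) τ :=
      (Real.hasDerivAt_log hτ0.ne').const_sub c
    have h2 : HasDerivAt (fun y : ℝ => y ^ σ) (σ * (c - Real.log τ) ^ (σ - 1))
        (c - Real.log τ) := Real.hasDerivAt_rpow_const (Or.inr hσ1.le)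
    have h3 := (h2.comp τ h1).const_mul (-(1/σ))
    convert h3 using 1
    · rfl
    · rfl
    · rfl
    · field_simp
  have hcont : ContinuousOn (fun τ => (c - Real.log τ) ^ (σ - 1) / τ) (Set.uIcc a x) := by
    apply ContinuousOn.div
    · exact (cont_rpow_const _ (by linarith)).comp_continuousOn
        (continuousOn_const.sub (Real.continuousOn_log.mono hsub))
    · exact continuousOn_id
    · exact fun τ hτ => hsub hτ
  rw [intervalIntegral.integral_eq_sub_of_hasDerivAt hderiv hcont.intervalIntegrable]
  ring

lemma Gn_nonneg {a b σ : ℝ} (ha : 0 < a) (hab : a < b) (hσ1 : 1 < σ) {x τ : ℝ}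
    (hx : x ∈ Icc a b) (hτ : τ ∈ Icc a b) : 0 ≤ Gn a b σ x τ := by
  have hσ0 : 0 < σ := by linarith
  have hp : 0 < σ - 1 := by linarith
  have hb : 0 < b := lt_trans ha hab
  have hx0 : 0 < x := lt_of_lt_of_le ha hx.1
  have hτ0 : 0 < τ := lt_of_lt_of_le ha hτ.1
  have hΓ : 0 < Real.Gamma σ := Real.Gamma_pos_of_pos hσ0
  have hL : 0 < Real.log (b / a) := Real.log_pos ((one_lt_div ha).2 hab)
  have hs0 : 0 ≤ Real.log (x / a) / Real.log (b / a) :=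
    div_nonneg (Real.log_nonneg ((one_le_div ha).2 hx.1)) hL.le
  have hlbτ : 0 ≤ Real.log (b / τ) := Real.log_nonneg ((one_le_div hτ0).2 hτ.2)
  have key : (max 0 (Real.log (x / τ))) ^ (σ - 1) ≤
      (Real.log (x / a) / Real.log (b / a)) ^ (σ - 1) * (Real.log (b / τ)) ^ (σ - 1) := by
    rcases le_or_gt (Real.log (x / τ)) 0 with h | h
    · rw [max_eq_left h, Real.zero_rpow hp.ne']
      positivity
    · rw [max_eq_right h.le, ← Real.mul_rpow hs0 hlbτ]
      apply Real.rpow_le_rpow h.le _ hp.le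
      rw [Real.log_div hx0.ne' hτ0.ne', Real.log_div hx0.ne' ha.ne',
        Real.log_div hb.ne' ha.ne', Real.log_div hb.ne' hτ0.ne'] at *
      rw [div_mul_eq_mul_div, le_div_iff₀ hL]
      have h1 : Real.log a ≤ Real.log τ := Real.log_le_log ha hτ.1
      have h2 : Real.log x ≤ Real.log b := Real.log_le_log hx0 hx.2
      nlinarith
  have : 0 ≤ ((Real.log (x / a) / Real.log (b / a)) ^ (σ - 1) * (Real.log (b / τ)) ^ (σ - 1)
      - (max 0 (Real.log (x / τ))) ^ (σ - 1)) / τ := by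
    apply div_nonneg (by linarith) hτ0.le
  exact mul_nonneg (by positivity) this

lemma Gn_integral {a b σ : ℝ} (ha : 0 < a) (hab : a < b) (hσ1 : 1 < σ) {x : ℝ}
    (hx : x ∈ Icc a b) :
    ∫ τ in a..b, Gn a b σ x τ =
      (Real.log (b / a)) ^ σ / (σ * Real.Gamma σ) *
        ((Real.log (x / a) / Real.log (b / a)) ^ (σ - 1)
          - (Real.log (x / a) / Real.log (b / a)) ^ σ) := by
  have hσ0 : 0 < σ := by linarith
  have hp : 0 < σ - 1 := by linarith
  have hb : 0 < b := lt_trans ha hab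
  have hx0 : 0 < x := lt_of_lt_of_le ha hx.1
  have hΓ : 0 < Real.Gamma σ := Real.Gamma_pos_of_pos hσ0
  have hL : 0 < Real.log (b / a) := Real.log_pos ((one_lt_div ha).2 hab)
  set s : ℝ := Real.log (x / a) / Real.log (b / a) with hs
  have hs0 : 0 ≤ s := div_nonneg (Real.log_nonneg ((one_le_div ha).2 hx.1)) hL.le
  set c : ℝ := 1 / Real.Gamma σ with hc
  -- continuity of pieces
  have contM : ContinuousOn (fun τ : ℝ => (max 0 (Real.log (x / τ))) ^ (σ - 1) / τ)
      {τ : ℝ | 0 < τ} := by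
    apply ContinuousOn.div
    · apply (cont_rpow_const _ hp.le).comp_continuousOn
      apply ContinuousOn.sup continuousOn_const
      apply ContinuousOn.log
      · exact continuousOn_const.div continuousOn_id (fun τ hτ => ne_of_gt hτ)
      · intro τ hτ
        exact ne_of_gt (div_pos hx0 hτ)
    · exact continuousOn_id
    · exact fun τ hτ => ne_of_gt hτ
  have contB : ContinuousOn (fun τ : ℝ => (Real.log b - Real.log τ) ^ (σ - 1) / τ)
      {τ : ℝ | 0 < τ} := by
    apply ContinuousOn.div
    · apply (cont_rpow_const _ hp.le).comp_continuousOn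
      exact continuousOn_const.sub (Real.continuousOn_log.mono (fun τ hτ => ne_of_gt hτ))
    · exact continuousOn_id
    · exact fun τ hτ => ne_of_gt hτ
  have hIccsub : ∀ u v : ℝ, a ≤ u → a ≤ v → Set.uIcc u v ⊆ {τ : ℝ | 0 < τ} := by
    intro u v hu hv τ hτ
    exact lt_of_lt_of_le ha (le_trans (le_min hu hv) hτ.1)
  -- split the integrand
  have hGnsplit : ∀ τ : ℝ, Gn a b σ x τ =
      c * s ^ (σ - 1) * ((Real.log b - Real.log τ) ^ (σ - 1) / τ)
        - c * ((max 0 (Real.log (x / τ))) ^ (σ - 1) / τ) := by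
    intro τ
    rcases eq_or_ne τ 0 with h | h
    · simp [Gn, h]
    · rw [Gn, Real.log_div hb.ne' h, hc]
      ring
  -- integral of the M part
  have hM1 : ∫ τ in a..x, (max 0 (Real.log (x / τ))) ^ (σ - 1) / τ
      = (Real.log x - Real.log a) ^ σ / σ := by
    rw [intervalIntegral.integral_congr (g := fun τ => (Real.log x - Real.log τ) ^ (σ - 1) / τ)]
    · rw [integral_aux hσ1 ha hx.1]
      rw [sub_self, Real.zero_rpow hσ0.ne']
      ring
    · intro τ hτ
      rw [Set.uIcc_of_le hx.1] at hτ
      have hτ0 : 0 < τ := lt_of_lt_of_le ha hτ.1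
      dsimp only
      rw [max_eq_right (Real.log_nonneg ((one_le_div hτ0).2 hτ.2)),
        Real.log_div hx0.ne' hτ0.ne']
  have hM2 : ∫ τ in x..b, (max 0 (Real.log (x / τ))) ^ (σ - 1) / τ = 0 := by
    rw [intervalIntegral.integral_congr (g := fun _ => (0:ℝ))]
    · simp
    · intro τ hτ
      rw [Set.uIcc_of_le hx.2] at hτ
      have hτ0 : 0 < τ := lt_of_lt_of_le hx0 hτ.1
      dsimp only
      rw [max_eq_left (Real.log_nonpos (by positivity) ((div_le_one hτ0).2 hτ.1)),
        Real.zero_rpow hp.ne']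
      simp
  have hMint : ∫ τ in a..b, (max 0 (Real.log (x / τ))) ^ (σ - 1) / τ
      = (Real.log x - Real.log a) ^ σ / σ := by
    rw [← intervalIntegral.integral_add_adjacent_intervals
      ((contM.mono (hIccsub a x le_rfl hx.1)).intervalIntegrable)
      ((contM.mono (hIccsub x b hx.1 hab.le)).intervalIntegrable), hM1, hM2, add_zero]
  have hBint : ∫ τ in a..b, (Real.log b - Real.log τ) ^ (σ - 1) / τ
      = (Real.log b - Real.log a) ^ σ / σ := by
    rw [integral_aux hσ1 ha hab.le]
    rw [sub_self, Real.zero_rpow hσ0.ne']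
    ring
  calc ∫ τ in a..b, Gn a b σ x τ
      = ∫ τ in a..b, (c * s ^ (σ - 1) * ((Real.log b - Real.log τ) ^ (σ - 1) / τ)
          - c * ((max 0 (Real.log (x / τ))) ^ (σ - 1) / τ)) := by
        exact intervalIntegral.integral_congr (fun τ _ => hGnsplit τ)
    _ = c * s ^ (σ - 1) * ((Real.log b - Real.log a) ^ σ / σ)
          - c * ((Real.log x - Real.log a) ^ σ / σ) := by
        rw [intervalIntegral.integral_sub
          (((contB.mono (hIccsub a b le_rfl hab.le)).intervalIntegrable).const_mul _)
          (((contM.mono (hIccsub a b le_rfl hab.le)).intervalIntegrable).const_mul _),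
          intervalIntegral.integral_const_mul, intervalIntegral.integral_const_mul, hBint, hMint]
    _ = (Real.log (b / a)) ^ σ / (σ * Real.Gamma σ) * (s ^ (σ - 1) - s ^ σ) := by
        have hxa : Real.log x - Real.log a = s * Real.log (b / a) := by
          rw [hs, Real.log_div hx0.ne' ha.ne', div_mul_cancel₀ _ hL.ne']
        rw [hxa, Real.mul_rpow hs0 hL.le, Real.log_div hb.ne' ha.ne', hc]
        ring
set_option maxHeartbeats 2000000 in
theorem stmt_8 (a b σ K B : ℝ) (ha : 0 < a) (hab : a < b) (hσ1 : 1 < σ) (hσ2 : σ ≤ 2)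
    (hK : 0 < K)
    (G : ℝ → ℝ → ℝ)
    (hG : ∀ x τ, G x τ =
      if τ ≤ x then
        (1 / Real.Gamma σ) *
          (((Real.log (x / a) / Real.log (b / a)) ^ (σ - 1) * (Real.log (b / τ)) ^ (σ - 1)
            - (Real.log (x / τ)) ^ (σ - 1)) / τ)
      else
        (1 / Real.Gamma σ) *
          ((Real.log (x / a) / Real.log (b / a)) ^ (σ - 1) * (Real.log (b / τ)) ^ (σ - 1) / τ))
    (F : ℝ → ℝ → ℝ)
    (hFcont : ContinuousOn (fun p : ℝ × ℝ => F p.1 p.2) (Icc a b ×ˢ univ))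
    (hFlip : ∀ x ∈ Icc a b, ∀ ω ϖ : ℝ, |F x ω - F x ϖ| ≤ K * |ω - ϖ|)
    (hsmall : K * (σ - 1) ^ (σ - 1) * (Real.log (b / a)) ^ σ / (σ ^ (σ + 1) * Real.Gamma σ) < 1) :
    ∃! u : C(Icc a b, ℝ), ∀ x : Icc a b,
      u x = (∫ τ in a..b, G (x : ℝ) τ *
              F τ (u ⟨max a (min τ b), by
                constructor
                · exact le_max_left a _
                · exact max_le (le_of_lt hab) (min_le_right τ b)⟩))
            + B * (Real.log ((x : ℝ) / a) / Real.log (b / a)) ^ (σ - 1) := by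
  have hσ0 : 0 < σ := by linarith
  have hp : 0 < σ - 1 := by linarith
  have hb0 : 0 < b := lt_trans ha hab
  have hΓ : 0 < Real.Gamma σ := Real.Gamma_pos_of_pos hσ0
  have hL : 0 < Real.log (b / a) := Real.log_pos ((one_lt_div ha).2 hab)
  have hcl : ∀ τ : ℝ, max a (min τ b) ∈ Icc a b := fun τ =>
    ⟨le_max_left _ _, max_le hab.le (min_le_right _ _)⟩
  have hcl_pos : ∀ τ : ℝ, 0 < max a (min τ b) := fun τ => lt_of_lt_of_le ha (hcl τ).1
  have hcl_eq : ∀ τ ∈ Icc a b, max a (min τ b) = τ := by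
    intro τ hτ
    rw [min_eq_left hτ.2, max_eq_right hτ.1]
  -- G agrees with Gn on the square
  have hGeq : ∀ x ∈ Icc a b, ∀ τ : ℝ, 0 < τ → G x τ = Gn a b σ x τ := by
    intro x hx τ hτ0
    have hx0 : 0 < x := lt_of_lt_of_le ha hx.1
    rw [hG, Gn]
    split_ifs with h
    · rw [max_eq_right (Real.log_nonneg ((one_le_div hτ0).2 h))]
    · rw [max_eq_left (Real.log_nonpos (by positivity)
        ((div_le_one hτ0).2 (le_of_not_ge h))), Real.zero_rpow hp.ne', sub_zero]
  -- clamped-subtype map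
  have hclS_cont : Continuous (fun τ : ℝ => (⟨max a (min τ b), hcl τ⟩ : Icc a b)) :=
    Continuous.subtype_mk (continuous_const.max (continuous_id.min continuous_const)) _
  -- joint continuity of the nice integrand
  have hcl_cont : Continuous (fun q : Icc a b × ℝ => max a (min q.2 b)) :=
    continuous_const.max ((continuous_snd.min continuous_const))
  have hx_cont : Continuous (fun q : Icc a b × ℝ => (q.1 : ℝ)) :=
    continuous_subtype_val.comp continuous_fst
  have hx_pos : ∀ q : Icc a b × ℝ, 0 < (q.1 : ℝ) := fun q => lt_of_lt_of_le ha q.1.2.1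
  have hGn_cont : Continuous (fun q : Icc a b × ℝ =>
    Gn a b σ (q.1 : ℝ) (max a (min q.2 b))) := by
    unfold Gn
    apply continuous_const.mul
    apply Continuous.div _ hcl_cont (fun q => (hcl_pos q.2).ne')
    apply Continuous.sub
    · apply Continuous.mul
      · exact (cont_rpow_const _ hp.le).comp
          ((hx_cont.div_const a).log (fun q => (div_pos (hx_pos q) ha).ne') |>.div_const _)
      · exact (cont_rpow_const _ hp.le).comp
          ((continuous_const.div hcl_cont (fun q => (hcl_pos q.2).ne')).log
            (fun q => (div_pos hb0 (hcl_pos q.2)).ne'))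
    · exact (cont_rpow_const _ hp.le).comp
        (continuous_const.max ((hx_cont.div hcl_cont (fun q => (hcl_pos q.2).ne')).log
          (fun q => (div_pos (hx_pos q) (hcl_pos q.2)).ne')))
  have hGnF_cont : ∀ u : C(Icc a b, ℝ),
      Continuous (fun q : Icc a b × ℝ =>
        Gn a b σ (q.1 : ℝ) (max a (min q.2 b)) *
          F (max a (min q.2 b)) (u ⟨max a (min q.2 b), hcl q.2⟩)) := by
    intro u
    have hF_cont : Continuous (fun q : Icc a b × ℝ =>
        F (max a (min q.2 b)) (u ⟨max a (min q.2 b), hcl q.2⟩)) := by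
      exact hFcont.comp_continuous
        (hcl_cont.prodMk (u.continuous.comp (hclS_cont.comp continuous_snd)))
        (fun q => ⟨hcl q.2, mem_univ _⟩)
    exact hGn_cont.mul hF_cont
  -- the original integrand agrees with the nice one
  have key_int_eq : ∀ u : C(Icc a b, ℝ), ∀ x : Icc a b,
      (∫ τ in a..b, G (x : ℝ) τ * F τ (u ⟨max a (min τ b), hcl τ⟩))
        = ∫ τ in a..b, Gn a b σ (x : ℝ) (max a (min τ b)) *
            F (max a (min τ b)) (u ⟨max a (min τ b), hcl τ⟩) := by
    intro u x
    apply intervalIntegral.integral_congr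
    intro τ hτ
    rw [Set.uIcc_of_le hab.le] at hτ
    have hτ0 : 0 < τ := lt_of_lt_of_le ha hτ.1
    simp only [hcl_eq τ hτ]
    rw [hGeq x x.2 τ hτ0]
  have hGx_cont : ∀ x : Icc a b, Continuous (fun τ : ℝ => Gn a b σ (x : ℝ) (max a (min τ b))) := by
    intro x
    have hxa : (0:ℝ) < (x : ℝ) := lt_of_lt_of_le ha x.2.1
    have hclc : Continuous (fun τ : ℝ => max a (min τ b)) :=
      continuous_const.max (continuous_id.min continuous_const)
    unfold Gn
    apply continuous_const.mul
    apply Continuous.div _ hclc (fun τ => (hcl_pos τ).ne')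
    apply Continuous.sub
    · apply continuous_const.mul
      exact (cont_rpow_const _ hp.le).comp
        ((continuous_const.div hclc (fun τ => (hcl_pos τ).ne')).log
          (fun τ => (div_pos hb0 (hcl_pos τ)).ne'))
    · exact (cont_rpow_const _ hp.le).comp
        (continuous_const.max ((continuous_const.div hclc (fun τ => (hcl_pos τ).ne')).log
          (fun τ => (div_pos hxa (hcl_pos τ)).ne')))
  have hFx_cont : ∀ u : C(Icc a b, ℝ), Continuous (fun τ : ℝ =>
      F (max a (min τ b)) (u ⟨max a (min τ b), hcl τ⟩)) := by
    intro u
    exact hFcont.comp_continuous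
      ((continuous_const.max (continuous_id.min continuous_const)).prodMk
        (u.continuous.comp hclS_cont)) (fun τ => ⟨hcl τ, mem_univ _⟩)
  -- the fixed point operator
  set T : C(Icc a b, ℝ) → C(Icc a b, ℝ) := fun u =>
    ⟨fun x => (∫ τ in a..b, G (x : ℝ) τ * F τ (u ⟨max a (min τ b), hcl τ⟩))
        + B * (Real.log ((x : ℝ) / a) / Real.log (b / a)) ^ (σ - 1), by
      apply Continuous.add
      · have : (fun x : Icc a b =>
            ∫ τ in a..b, G (x : ℝ) τ * F τ (u ⟨max a (min τ b), hcl τ⟩))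
            = fun x : Icc a b => ∫ τ in a..b, Gn a b σ (x : ℝ) (max a (min τ b)) *
              F (max a (min τ b)) (u ⟨max a (min τ b), hcl τ⟩) := funext (key_int_eq u)
        rw [this]
        exact intervalIntegral.continuous_parametric_intervalIntegral_of_continuous'
          (f := fun (x : Icc a b) (τ : ℝ) => Gn a b σ (x : ℝ) (max a (min τ b)) *
            F (max a (min τ b)) (u ⟨max a (min τ b), hcl τ⟩)) (hGnF_cont u) a b
      · apply continuous_const.mul
        apply (cont_rpow_const _ hp.le).comp
        exact ((continuous_subtype_val.div_const a).log
          (fun x => (div_pos (lt_of_lt_of_le ha x.2.1) ha).ne')).div_const _⟩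
  -- bound on the integral of Gn
  have hIntGn : ∀ x : Icc a b, (∫ τ in a..b, Gn a b σ (x : ℝ) (max a (min τ b)))
      ≤ (σ - 1) ^ (σ - 1) * (Real.log (b / a)) ^ σ / (σ ^ (σ + 1) * Real.Gamma σ) := by
    intro x
    have h1 : (∫ τ in a..b, Gn a b σ (x : ℝ) (max a (min τ b)))
        = ∫ τ in a..b, Gn a b σ (x : ℝ) τ := by
      apply intervalIntegral.integral_congr
      intro τ hτ
      rw [Set.uIcc_of_le hab.le] at hτ
      dsimp only
      rw [hcl_eq τ hτ]
    rw [h1, Gn_integral ha hab hσ1 x.2]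
    have hx0 : 0 < (x : ℝ) := lt_of_lt_of_le ha x.2.1
    have hs0 : 0 ≤ Real.log ((x : ℝ) / a) / Real.log (b / a) :=
      div_nonneg (Real.log_nonneg ((one_le_div ha).2 x.2.1)) hL.le
    have hs1 : Real.log ((x : ℝ) / a) / Real.log (b / a) ≤ 1 := by
      rw [div_le_one hL]
      exact Real.log_le_log (by positivity) ((div_le_div_iff_of_pos_right ha).2 x.2.2)
    have key := aux_maxineq hp hs0 hs1
    rw [show σ - 1 + 1 = σ by ring] at key
    have hσσ : σ ^ (σ + 1) = σ ^ σ * σ := by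
      rw [Real.rpow_add hσ0, Real.rpow_one]
    have hfin : (Real.log (b / a)) ^ σ / (σ * Real.Gamma σ) * ((σ - 1) ^ (σ - 1) / σ ^ σ)
        = (σ - 1) ^ (σ - 1) * (Real.log (b / a)) ^ σ / (σ ^ (σ + 1) * Real.Gamma σ) := by
      rw [hσσ]
      have h2 : (0:ℝ) < σ ^ σ := Real.rpow_pos_of_pos hσ0 _
      field_simp
    calc (Real.log (b / a)) ^ σ / (σ * Real.Gamma σ) *
          ((Real.log ((x : ℝ) / a) / Real.log (b / a)) ^ (σ - 1)
            - (Real.log ((x : ℝ) / a) / Real.log (b / a)) ^ σ)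
        ≤ (Real.log (b / a)) ^ σ / (σ * Real.Gamma σ) * ((σ - 1) ^ (σ - 1) / σ ^ σ) := by
          apply mul_le_mul_of_nonneg_left key
          positivity
      _ = _ := hfin
  -- contraction estimate
  have hk0 : 0 < K * (σ - 1) ^ (σ - 1) * (Real.log (b / a)) ^ σ / (σ ^ (σ + 1) * Real.Gamma σ) := by
    have h1 : (0:ℝ) < (σ - 1) ^ (σ - 1) := Real.rpow_pos_of_pos hp _
    have h2 : (0:ℝ) < (Real.log (b / a)) ^ σ := Real.rpow_pos_of_pos hL _
    have h3 : (0:ℝ) < σ ^ (σ + 1) := Real.rpow_pos_of_pos hσ0 _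
    positivity
  have hdistTT : ∀ u v : C(Icc a b, ℝ), dist (T u) (T v)
      ≤ (K * (σ - 1) ^ (σ - 1) * (Real.log (b / a)) ^ σ / (σ ^ (σ + 1) * Real.Gamma σ))
        * dist u v := by
    intro u v
    rw [ContinuousMap.dist_le (mul_nonneg hk0.le dist_nonneg)]
    intro x
    rw [Real.dist_eq]
    have hTu : T u x = (∫ τ in a..b, Gn a b σ (x : ℝ) (max a (min τ b)) *
        F (max a (min τ b)) (u ⟨max a (min τ b), hcl τ⟩))
        + B * (Real.log ((x : ℝ) / a) / Real.log (b / a)) ^ (σ - 1) := by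
      show (∫ τ in a..b, G (x : ℝ) τ * F τ (u ⟨max a (min τ b), hcl τ⟩)) + _ = _
      rw [key_int_eq u x]
    have hTv : T v x = (∫ τ in a..b, Gn a b σ (x : ℝ) (max a (min τ b)) *
        F (max a (min τ b)) (v ⟨max a (min τ b), hcl τ⟩))
        + B * (Real.log ((x : ℝ) / a) / Real.log (b / a)) ^ (σ - 1) := by
      show (∫ τ in a..b, G (x : ℝ) τ * F τ (v ⟨max a (min τ b), hcl τ⟩)) + _ = _
      rw [key_int_eq v x]
    rw [hTu, hTv, add_sub_add_right_eq_sub]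
    have hcu : Continuous (fun τ : ℝ => Gn a b σ (x : ℝ) (max a (min τ b)) *
        F (max a (min τ b)) (u ⟨max a (min τ b), hcl τ⟩)) :=
      (hGx_cont x).mul (hFx_cont u)
    have hcv : Continuous (fun τ : ℝ => Gn a b σ (x : ℝ) (max a (min τ b)) *
        F (max a (min τ b)) (v ⟨max a (min τ b), hcl τ⟩)) :=
      (hGx_cont x).mul (hFx_cont v)
    have hcG : Continuous (fun τ : ℝ => Gn a b σ (x : ℝ) (max a (min τ b))) :=
      hGx_cont x
    rw [← intervalIntegral.integral_sub (hcu.intervalIntegrable a b)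
      (hcv.intervalIntegrable a b)]
    refine le_trans (intervalIntegral.abs_integral_le_integral_abs hab.le) ?_
    have hmono : (∫ τ in a..b, |Gn a b σ (x : ℝ) (max a (min τ b)) *
          F (max a (min τ b)) (u ⟨max a (min τ b), hcl τ⟩)
          - Gn a b σ (x : ℝ) (max a (min τ b)) *
          F (max a (min τ b)) (v ⟨max a (min τ b), hcl τ⟩)|)
        ≤ ∫ τ in a..b, Gn a b σ (x : ℝ) (max a (min τ b)) * (K * dist u v) := by
      apply intervalIntegral.integral_mono_on hab.le
        ((hcu.sub hcv).abs.intervalIntegrable a b)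
        ((hcG.mul continuous_const).intervalIntegrable a b)
      intro τ hτ
      have hGnn : 0 ≤ Gn a b σ (x : ℝ) (max a (min τ b)) :=
        Gn_nonneg ha hab hσ1 x.2 (hcl τ)
      dsimp only [Pi.sub_apply, Pi.mul_apply]
      rw [← mul_sub, abs_mul, abs_of_nonneg hGnn]
      apply mul_le_mul_of_nonneg_left _ hGnn
      refine le_trans (hFlip _ (hcl τ) _ _) ?_
      apply mul_le_mul_of_nonneg_left _ hK.le
      rw [← Real.dist_eq]
      exact ContinuousMap.dist_apply_le_dist _
    refine le_trans hmono ?_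
    rw [intervalIntegral.integral_mul_const]
    calc (∫ τ in a..b, Gn a b σ (x : ℝ) (max a (min τ b))) * (K * dist u v)
        ≤ ((σ - 1) ^ (σ - 1) * (Real.log (b / a)) ^ σ / (σ ^ (σ + 1) * Real.Gamma σ))
          * (K * dist u v) := by
          apply mul_le_mul_of_nonneg_right (hIntGn x) (by positivity)
      _ = _ := by ring
  -- Banach fixed point
  have hcontr : ContractingWith
      ⟨K * (σ - 1) ^ (σ - 1) * (Real.log (b / a)) ^ σ / (σ ^ (σ + 1) * Real.Gamma σ), hk0.le⟩ T := by
    constructor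
    · exact_mod_cast hsmall
    · exact LipschitzWith.of_dist_le_mul hdistTT
  refine ⟨hcontr.fixedPoint, fun x => ?_, fun v hv => ?_⟩
  · exact (DFunLike.congr_fun hcontr.fixedPoint_isFixedPt x).symm
  · exact hcontr.fixedPoint_unique (ContinuousMap.ext fun x => (hv x).symm)
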